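/- arXiv:2206.09335 — 3 statements merged into one kernel-verified Lean document; each statement's English description precedes it below -/
import Mathlib

section
/- Let Γ be a nontrivial finite cyclic group of order n. Then the group Γ × ℤ_n (≅ ℤ_n × ℤ_n) is not isomorphic to any group admitting a presentation with k+1 generators and k+1 relations for any k ≥ 0. -/
open scoped commutatorElement

namespace Stmt3Aux

/-- The Heisenberg group over `ZMod n`. -/
@[ext] structure Heis (n : ℕ) : Type where
  a : ZMod n
  b : ZMod n
  c : ZMod n

namespace Heis

variable {n : ℕ}

instance : Mul (Heis n) := ⟨fun x y => ⟨x.a + y.a, x.b + y.b, x.c + y.c + x.a * y.b⟩⟩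
instance : One (Heis n) := ⟨⟨0, 0, 0⟩⟩
instance : Inv (Heis n) := ⟨fun x => ⟨-x.a, -x.b, -x.c + x.a * x.b⟩⟩

@[simp] lemma mul_a (x y : Heis n) : (x * y).a = x.a + y.a := rfl
@[simp] lemma mul_b (x y : Heis n) : (x * y).b = x.b + y.b := rfl
@[simp] lemma mul_c (x y : Heis n) : (x * y).c = x.c + y.c + x.a * y.b := rfl
@[simp] lemma one_a : (1 : Heis n).a = 0 := rfl
@[simp] lemma one_b : (1 : Heis n).b = 0 := rfl
@[simp] lemma one_c : (1 : Heis n).c = 0 := rfl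
@[simp] lemma inv_a (x : Heis n) : x⁻¹.a = -x.a := rfl
@[simp] lemma inv_b (x : Heis n) : x⁻¹.b = -x.b := rfl
@[simp] lemma inv_c (x : Heis n) : x⁻¹.c = -x.c + x.a * x.b := rfl

instance : Group (Heis n) where
  mul_assoc a b c := by ext <;> simp <;> ring
  one_mul a := by ext <;> simp
  mul_one a := by ext <;> simp
  inv_mul_cancel a := by ext <;> simp

/-- Projection onto the first two coordinates. -/
def p (n : ℕ) : Heis n →* Multiplicative (ZMod n) × Multiplicative (ZMod n) where
  toFun x := (Multiplicative.ofAdd x.a, Multiplicative.ofAdd x.b)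
  map_one' := rfl
  map_mul' _ _ := rfl

lemma p_surjective : Function.Surjective (p n) :=
  fun y => ⟨⟨y.1.toAdd, y.2.toAdd, 0⟩, rfl⟩

lemma mem_ker_p {x : Heis n} : x ∈ (p n).ker ↔ x.a = 0 ∧ x.b = 0 := by
  constructor
  · intro h
    exact ⟨congrArg Multiplicative.toAdd (congrArg Prod.fst h),
      congrArg Multiplicative.toAdd (congrArg Prod.snd h)⟩
  · intro ⟨h1, h2⟩
    show (_, _) = _
    rw [h1, h2]; rfl


lemma ker_p_central {z : Heis n} (hz : z ∈ (p n).ker) (x : Heis n) : x * z = z * x := by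
  obtain ⟨h1, h2⟩ := mem_ker_p.mp hz
  ext <;> simp [h1, h2] <;> ring

lemma commutator_eq (c₁ c c₂ : ZMod n) :
    ⁅(⟨1, 0, c₁⟩ : Heis n), (⟨0, c, c₂⟩ : Heis n)⁆ = (⟨0, 0, c⟩ : Heis n) := by
  rw [commutatorElement_def]
  ext <;> simp <;> ring

lemma p_eq_iff {x y : Heis n} : p n x = p n y ↔ x.a = y.a ∧ x.b = y.b := by
  constructor
  · intro h
    exact ⟨congrArg Multiplicative.toAdd (congrArg Prod.fst h),
      congrArg Multiplicative.toAdd (congrArg Prod.snd h)⟩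
  · intro ⟨h1, h2⟩
    show (_, _) = (_, _)
    rw [h1, h2]

end Heis


section Word

/-- The "word" `∏ i, x i ^ a i` (in a fixed order) in an arbitrary group. -/
def wordPow {g : ℕ} {G : Type*} [Group G] (x : Fin g → G) (a : Fin g → ℤ) : G :=
  (List.ofFn fun i => x i ^ a i).prod

lemma map_wordPow {g : ℕ} {G H : Type*} [Group G] [Group H] (f : G →* H)
    (x : Fin g → G) (a : Fin g → ℤ) : f (wordPow x a) = wordPow (fun i => f (x i)) a := by
  rw [wordPow, map_list_prod, wordPow, List.map_ofFn]
  simp [Function.comp_def]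

lemma wordPow_comm {g : ℕ} {G : Type*} [CommGroup G] (x : Fin g → G) (a : Fin g → ℤ) :
    wordPow x a = ∏ i, x i ^ a i := by
  rw [wordPow, List.prod_ofFn]

@[simp] lemma wordPow_zero {g : ℕ} {G : Type*} [Group G] (x : Fin g → G) :
    wordPow x 0 = 1 := by
  simp [wordPow, List.ofFn_const]

end Word

/-- Exponent-vector (abelianization) map of the free group on `Fin g`. -/
def expVec (g : ℕ) : FreeGroup (Fin g) →* Multiplicative (Fin g → ℤ) :=
  FreeGroup.lift fun i => Multiplicative.ofAdd (Pi.single i 1)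

@[simp] lemma expVec_of {g : ℕ} (i : Fin g) :
    expVec g (FreeGroup.of i) = Multiplicative.ofAdd (Pi.single i 1) :=
  FreeGroup.lift_apply_of

lemma expVec_wordPow {g : ℕ} (a : Fin g → ℤ) :
    (expVec g (wordPow FreeGroup.of a)).toAdd = a := by
  rw [map_wordPow, wordPow_comm]
  have : ∀ i : Fin g, expVec g (FreeGroup.of i) ^ a i
      = Multiplicative.ofAdd (Pi.single i (a i)) := by
    intro i
    rw [expVec_of, ← ofAdd_zsmul]
    congr 1
    ext j
    by_cases hj : j = i <;> simp [Pi.single_apply, hj]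
  simp_rw [this]
  rw [← ofAdd_sum]
  simp [Finset.univ_sum_single]

/-- An integer matrix whose image has finite index is injective (as `mulVec`). -/
lemma mulVec_eq_zero {g : ℕ} (M : Matrix (Fin g) (Fin g) ℤ) (m : ℕ) (hm : m ≠ 0)
    (hfin : ∀ x : Fin g → ℤ, ∃ a, M.mulVec a = (m : ℤ) • x)
    (a : Fin g → ℤ) (ha : M.mulVec a = 0) : a = 0 := by
  by_contra hne
  have hdet : M.det = 0 := Matrix.exists_mulVec_eq_zero_iff.mp ⟨a, hne, ha⟩
  obtain ⟨u, hu, huM⟩ := Matrix.exists_vecMul_eq_zero_iff.mpr hdet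
  apply hu
  funext j
  obtain ⟨b, hb⟩ := hfin (Pi.single j 1)
  have h1 : dotProduct u (M.mulVec b) = 0 := by
    rw [Matrix.dotProduct_mulVec, huM, zero_dotProduct]
  rw [hb] at h1
  have h2 : (m : ℤ) * u j = 0 := by
    simpa [dotProduct, Pi.single_apply, mul_comm] using h1
  have := mul_eq_zero.mp h2
  simpa [hm] using this

section Key

variable {g : ℕ} (r : Fin g → FreeGroup (Fin g))

/-- The matrix of exponent vectors of the relators (column `i` is the abelianization
of `r i`). -/
def relMatrix : Matrix (Fin g) (Fin g) ℤ :=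
  Matrix.of fun x i => (expVec g (r i)).toAdd x

lemma toAdd_expVec_wordPow (a : Fin g → ℤ) :
    (expVec g (wordPow r a)).toAdd = (relMatrix r).mulVec a := by
  rw [map_wordPow, wordPow_comm]
  funext x
  rw [toAdd_prod]
  simp only [toAdd_zpow]
  rw [Matrix.mulVec, Finset.sum_apply]
  congr 1
  funext i
  simp [relMatrix, dotProduct, mul_comm]

/-- Any element of the normal closure is, modulo `⁅F, N⁆`, a product of powers of the
relators, with exponent vector recording its abelianization. -/
lemma exists_wordPow (y : FreeGroup (Fin g)) (hy : y ∈ Subgroup.normalClosure (Set.range r)) :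
    ∃ a : Fin g → ℤ,
      (expVec g y).toAdd = (relMatrix r).mulVec a ∧
      (QuotientGroup.mk' ⁅(⊤ : Subgroup (FreeGroup (Fin g))), Subgroup.normalClosure (Set.range r)⁆) y
        = QuotientGroup.mk' _ (wordPow r a) := by
  classical
  let K : Subgroup (FreeGroup (Fin g)) :=
    ⁅(⊤ : Subgroup (FreeGroup (Fin g))), Subgroup.normalClosure (Set.range r)⁆
  haveI : K.Normal := Subgroup.commutator_normal ⊤ _
  let ρ : FreeGroup (Fin g) →* FreeGroup (Fin g) ⧸ K := QuotientGroup.mk' K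
  have hker : ∀ x : FreeGroup (Fin g), x ∈ K → ρ x = 1 := by
    intro x hx
    rwa [← MonoidHom.mem_ker, QuotientGroup.ker_mk']
  let t : Fin g → FreeGroup (Fin g) ⧸ K := fun i => ρ (r i)
  have hrN : ∀ i, r i ∈ Subgroup.normalClosure (Set.range r) := fun i =>
    Subgroup.subset_normalClosure ⟨i, rfl⟩
  have hcomm : ∀ x ∈ Set.range t, ∀ y ∈ Set.range t, x * y = y * x := by
    rintro _ ⟨i, rfl⟩ _ ⟨j, rfl⟩
    have h1 : ρ ⁅r i, r j⁆ = 1 :=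
      hker _ (Subgroup.commutator_mem_commutator (Subgroup.mem_top _) (hrN j))
    rw [map_commutatorElement] at h1
    exact commutatorElement_eq_one_iff_mul_comm.mp h1
  let T : Subgroup (FreeGroup (Fin g) ⧸ K) := Subgroup.closure (Set.range t)
  have htT : ∀ i, t i ∈ T := fun i => Subgroup.subset_closure ⟨i, rfl⟩
  -- T is normal
  have hTnormal : T.Normal := by
    constructor
    intro x hx q
    induction hx using Subgroup.closure_induction with
    | mem z hz =>
        obtain ⟨i, rfl⟩ := hz
        obtain ⟨f, rfl⟩ := QuotientGroup.mk'_surjective K q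
        show ρ f * t i * (ρ f)⁻¹ ∈ T
        have h1 : ρ (f * r i * f⁻¹ * (r i)⁻¹) = 1 :=
          hker _ (Subgroup.commutator_mem_commutator (Subgroup.mem_top f) (hrN i))
        have h2 : ρ f * t i * (ρ f)⁻¹ = t i := by
          show ρ f * ρ (r i) * (ρ f)⁻¹ = ρ (r i)
          rw [← map_inv, ← map_mul, ← map_mul]
          have := congrArg (· * ρ (r i)) h1
          simpa [map_mul, map_inv, mul_assoc] using this
        rw [h2]
        exact htT i
    | one => simpa using Subgroup.one_mem T
    | mul a b _ _ ha hb =>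
        have h : q * (a * b) * q⁻¹ = (q * a * q⁻¹) * (q * b * q⁻¹) := by group
        rw [h]; exact Subgroup.mul_mem _ ha hb
    | inv a _ ha =>
        have h : q * a⁻¹ * q⁻¹ = (q * a * q⁻¹)⁻¹ := by group
        rw [h]; exact Subgroup.inv_mem _ ha
  -- N maps into T
  have hNT : ρ y ∈ T := by
    have hle : Subgroup.normalClosure (Set.range r) ≤ T.comap ρ := by
      haveI : (T.comap ρ).Normal := Subgroup.Normal.comap hTnormal ρ
      apply Subgroup.normalClosure_le_normal
      rintro _ ⟨i, rfl⟩
      exact htT i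
    exact hle hy
  -- elements of T are wordPows of t
  letI : CommGroup T := Subgroup.closureCommGroupOfComm hcomm
  let t' : Fin g → T := fun i => ⟨t i, htT i⟩
  have hTword : ∀ x : FreeGroup (Fin g) ⧸ K, x ∈ T → ∃ a : Fin g → ℤ, x = wordPow t a := by
    intro x hx
    have key : ∃ a : Fin g → ℤ, (⟨x, hx⟩ : T) = ∏ i, t' i ^ a i := by
      induction hx using Subgroup.closure_induction with
      | mem z hz =>
          obtain ⟨i, hi⟩ := hz
          refine ⟨Pi.single i 1, ?_⟩
          rw [Finset.prod_eq_single i]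
          · ext; simp [t', ← hi]
          · intro j _ hj; simp [Pi.single_apply, hj]
          · simp
      | one => exact ⟨0, by simp⟩
      | mul a b ha hb iha ihb =>
          obtain ⟨u, hu⟩ := iha
          obtain ⟨v, hv⟩ := ihb
          refine ⟨u + v, ?_⟩
          have h : (⟨a * b, mul_mem ha hb⟩ : T) = (⟨a, ha⟩ : T) * ⟨b, hb⟩ := rfl
          rw [h, hu, hv, ← Finset.prod_mul_distrib]
          congr 1; funext i; simp [zpow_add]
      | inv a ha iha =>
          obtain ⟨u, hu⟩ := iha
          refine ⟨-u, ?_⟩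
          have h : (⟨a⁻¹, inv_mem ha⟩ : T) = (⟨a, ha⟩ : T)⁻¹ := rfl
          rw [h, hu, ← Finset.prod_inv_distrib]
          congr 1; funext i; simp [zpow_neg]
    obtain ⟨a, ha⟩ := key
    refine ⟨a, ?_⟩
    calc x = ((⟨x, hx⟩ : T) : FreeGroup (Fin g) ⧸ K) := rfl
      _ = ((∏ i, t' i ^ a i : T) : FreeGroup (Fin g) ⧸ K) := by rw [ha]
      _ = ((wordPow t' a : T) : FreeGroup (Fin g) ⧸ K) := by rw [wordPow_comm]
      _ = T.subtype (wordPow t' a) := rfl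
      _ = wordPow (fun i => T.subtype (t' i)) a := map_wordPow _ _ _
      _ = wordPow t a := rfl
  obtain ⟨a, ha⟩ := hTword (ρ y) hNT
  have hρword : ρ y = ρ (wordPow r a) := by rw [ha, map_wordPow]
  refine ⟨a, ?_, hρword⟩
  -- abelianization computation
  have hKab : ∀ x : FreeGroup (Fin g), x ∈ K → expVec g x = 1 := by
    intro x hx
    have hle : K ≤ (expVec g).ker := by
      rw [Subgroup.commutator_le]
      intro g₁ _ g₂ _
      rw [MonoidHom.mem_ker, map_commutatorElement]
      exact commutatorElement_eq_one_iff_mul_comm.mpr (mul_comm _ _)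
    exact hle hx
  have hmem : y * (wordPow r a)⁻¹ ∈ K := by
    have : ρ (y * (wordPow r a)⁻¹) = 1 := by
      rw [map_mul, map_inv, hρword]
      simp
    rwa [← QuotientGroup.ker_mk' K, MonoidHom.mem_ker]
  have hexp : expVec g y = expVec g (wordPow r a) := by
    have h1 := hKab _ hmem
    rw [map_mul, map_inv] at h1
    have := congrArg (· * expVec g (wordPow r a)) h1
    simpa [mul_assoc] using this
  rw [hexp, toAdd_expVec_wordPow]

end Key

end Stmt3Aux

section MainProof
open Stmt3Aux

/-- Let `Γ` be a nontrivial finite cyclic group of order `n`. Then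
`Γ × ℤ_n` (≅ `ℤ_n × ℤ_n`) is not isomorphic to any group admitting a presentation with
`k + 1` generators and `k + 1` relations, for any `k ≥ 0`. -/
theorem stmt_3 {Γ : Type*} [Group Γ] [Finite Γ] [IsCyclic Γ] [Nontrivial Γ]
    (n : ℕ) (hn : Nat.card Γ = n)
    (k : ℕ) (r : Fin (k + 1) → FreeGroup (Fin (k + 1))) :
    ¬ Nonempty ((Γ × Multiplicative (ZMod n)) ≃*
      FreeGroup (Fin (k + 1)) ⧸ Subgroup.normalClosure (Set.range r)) := by
  rintro ⟨e⟩
  classical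
  have hn2 : 2 ≤ n := hn ▸ Finite.one_lt_card
  haveI : NeZero n := ⟨by omega⟩
  haveI : Fact (1 < n) := ⟨by omega⟩
  -- identifications
  let ι : Multiplicative (ZMod n) ≃* Γ := hn ▸ zmodCyclicMulEquiv ‹IsCyclic Γ›
  let ι' : Multiplicative (ZMod n) × Multiplicative (ZMod n) ≃* Γ × Multiplicative (ZMod n) :=
    ι.prodCongr (MulEquiv.refl _)
  let P : Heis n →* Γ × Multiplicative (ZMod n) := ι'.toMonoidHom.comp (Heis.p n)
  have hPsurj : Function.Surjective P := ι'.surjective.comp Heis.p_surjective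
  have hP1 : ∀ x : Heis n, P x = 1 → Heis.p n x = 1 := fun x h =>
    ι'.injective (h.trans (map_one ι').symm)
  -- the presentation map
  let π : FreeGroup (Fin (k + 1)) →* Γ × Multiplicative (ZMod n) :=
    e.symm.toMonoidHom.comp (QuotientGroup.mk' (Subgroup.normalClosure (Set.range r)))
  have hπ : ∀ f, π f = 1 ↔ f ∈ Subgroup.normalClosure (Set.range r) := by
    intro f
    rw [show π f = e.symm ((QuotientGroup.mk' _) f) from rfl, MulEquiv.map_eq_one_iff]
    exact QuotientGroup.eq_one_iff f
  have hπsurj : Function.Surjective π :=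
    e.symm.surjective.comp (QuotientGroup.mk'_surjective _)
  -- the lift to the Heisenberg group
  let φ : FreeGroup (Fin (k + 1)) →* Heis n :=
    FreeGroup.lift fun i => Function.surjInv hPsurj (π (FreeGroup.of i))
  have hPφ : ∀ f, P (φ f) = π f := by
    have h : P.comp φ = π := by
      apply FreeGroup.ext_hom
      intro i
      show P (φ (FreeGroup.of i)) = π (FreeGroup.of i)
      rw [show φ (FreeGroup.of i) = Function.surjInv hPsurj (π (FreeGroup.of i)) from
        FreeGroup.lift_apply_of]
      exact Function.surjInv_eq hPsurj _
    exact fun f => DFunLike.congr_fun h f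
  -- finiteness of the quotient
  haveI : Finite (FreeGroup (Fin (k + 1)) ⧸ Subgroup.normalClosure (Set.range r)) :=
    Finite.of_equiv _ e.toEquiv
  set m := Nat.card (FreeGroup (Fin (k + 1)) ⧸ Subgroup.normalClosure (Set.range r)) with hmdef
  have hm : m ≠ 0 := Nat.card_pos.ne'
  have hpowN : ∀ f : FreeGroup (Fin (k + 1)), f ^ m ∈ Subgroup.normalClosure (Set.range r) := by
    intro f
    have h : ((QuotientGroup.mk' (Subgroup.normalClosure (Set.range r))) f) ^ m = 1 :=
      pow_card_eq_one'
    rw [← map_pow] at h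
    exact (QuotientGroup.eq_one_iff _).mp h
  -- finite index of the relation matrix
  have hfin : ∀ x : Fin (k + 1) → ℤ, ∃ a, (relMatrix r).mulVec a = (m : ℤ) • x := by
    intro x
    obtain ⟨a, ha1, -⟩ := exists_wordPow r ((wordPow FreeGroup.of x) ^ m) (hpowN _)
    refine ⟨a, ?_⟩
    rw [← ha1, map_pow, toAdd_pow, expVec_wordPow]
    simp [natCast_zsmul]
  -- the two special elements
  obtain ⟨f₁, hf₁⟩ := hπsurj (P ⟨1, 0, 0⟩)
  obtain ⟨f₂, hf₂⟩ := hπsurj (P ⟨0, 1, 0⟩)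
  have h₁ : Heis.p n (φ f₁) = Heis.p n ⟨1, 0, 0⟩ := by
    apply ι'.injective
    show P (φ f₁) = P ⟨1, 0, 0⟩
    rw [hPφ, hf₁]
  have h₂ : Heis.p n (φ f₂) = Heis.p n ⟨0, 1, 0⟩ := by
    apply ι'.injective
    show P (φ f₂) = P ⟨0, 1, 0⟩
    rw [hPφ, hf₂]
  obtain ⟨ha1, hb1⟩ := Heis.p_eq_iff.mp h₁
  obtain ⟨ha2, hb2⟩ := Heis.p_eq_iff.mp h₂
  have hx₁ : φ f₁ = ⟨1, 0, (φ f₁).c⟩ := Heis.ext ha1 hb1 rfl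
  have hx₂ : φ f₂ = ⟨0, 1, (φ f₂).c⟩ := Heis.ext ha2 hb2 rfl
  -- the commutator word
  set w := ⁅f₁, f₂⁆ with hw
  have hφw : φ w = ⟨0, 0, 1⟩ := by
    rw [hw, map_commutatorElement, hx₁, hx₂, Heis.commutator_eq]
  have hwN : w ∈ Subgroup.normalClosure (Set.range r) := by
    rw [← hπ]
    rw [← hPφ, hφw]
    show ι' (Heis.p n ⟨0, 0, 1⟩) = 1
    rw [show Heis.p n (⟨0, 0, 1⟩ : Heis n) = 1 from rfl, map_one]
  have hexpw : (expVec (k + 1) w).toAdd = 0 := by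
    rw [hw, map_commutatorElement,
      commutatorElement_eq_one_iff_mul_comm.mpr (mul_comm _ _)]
    rfl
  -- apply the key lemma
  obtain ⟨a, hA, hB⟩ := exists_wordPow r w hwN
  have ha0 : a = 0 := mulVec_eq_zero (relMatrix r) m hm hfin a (by rw [← hA, hexpw])
  rw [ha0, wordPow_zero, map_one] at hB
  have hwK : w ∈ ⁅(⊤ : Subgroup (FreeGroup (Fin (k + 1)))),
      Subgroup.normalClosure (Set.range r)⁆ :=
    (QuotientGroup.eq_one_iff w).mp hB
  -- the commutator subgroup ⁅⊤, N⁆ dies under φ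
  have hKle : ⁅(⊤ : Subgroup (FreeGroup (Fin (k + 1)))),
      Subgroup.normalClosure (Set.range r)⁆ ≤ φ.ker := by
    rw [Subgroup.commutator_le]
    intro g₁ _ g₂ hg₂
    rw [MonoidHom.mem_ker, map_commutatorElement]
    apply commutatorElement_eq_one_iff_mul_comm.mpr
    have hz : φ g₂ ∈ (Heis.p n).ker := by
      rw [MonoidHom.mem_ker]
      apply hP1
      rw [hPφ]
      exact (hπ g₂).mpr hg₂
    exact Heis.ker_p_central hz (φ g₁)
  have : φ w = 1 := hKle hwK
  rw [hφw] at this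
  have h10 : (1 : ZMod n) = 0 := congrArg Heis.c this
  exact one_ne_zero h10

end MainProof
end

section
/- Let G and H be groups and let i : G → G * H, j : H → G * H be the canonical inclusions into the free product. Let N be a normal subgroup of G * H, let G' = i^{-1}(N), and let N' be the normal closure of i(G') in G * H. Then (G * H)/N is isomorphic to the quotient of ((G/G') * H) by the image of N under the natural surjection G * H → (G/G') * H. -/
/-- Let `G`, `H` be groups and `i : G →* G ∗ H` the canonical inclusion into the
free product. Let `N` be a normal subgroup of `G ∗ H`, let `G' = i⁻¹(N)`, and let `N'` be the
normal closure of `i(G')` in `G ∗ H` (the kernel of the natural surjection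
`π : G ∗ H →* (G/G') ∗ H`). Then `(G ∗ H)/N` is isomorphic to the quotient of `(G/G') ∗ H` by
the image of `N` under `π` (equivalently, by its normal closure, since `π` is surjective). -/
theorem stmt_6 {G H : Type*} [Group G] [Group H]
    (N : Subgroup (Monoid.Coprod G H)) [N.Normal]
    (G' : Subgroup G)
    (hG' : G' = N.comap (Monoid.Coprod.inl : G →* Monoid.Coprod G H))
    [G'.Normal]
    (π : Monoid.Coprod G H →* Monoid.Coprod (G ⧸ G') H)
    (hπ : π = Monoid.Coprod.map (QuotientGroup.mk' G') (MonoidHom.id H)) :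
    Nonempty ((Monoid.Coprod G H ⧸ N) ≃*
      (Monoid.Coprod (G ⧸ G') H) ⧸ Subgroup.normalClosure (π '' (N : Set (Monoid.Coprod G H)))) := by
  set K := Subgroup.normalClosure (π '' (N : Set (Monoid.Coprod G H))) with hK
  -- forward map
  have hNker : N ≤ ((QuotientGroup.mk' K).comp π).ker := by
    intro n hn
    simp only [MonoidHom.mem_ker, MonoidHom.comp_apply, QuotientGroup.mk'_apply,
      QuotientGroup.eq_one_iff]
    exact Subgroup.subset_normalClosure ⟨n, hn, rfl⟩
  set φ : (Monoid.Coprod G H ⧸ N) →*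
      (Monoid.Coprod (G ⧸ G') H) ⧸ K :=
    QuotientGroup.lift N ((QuotientGroup.mk' K).comp π) hNker with hφ
  -- map G ⧸ G' →* (G ∗ H) ⧸ N
  have hG'ker : ∀ g ∈ G', g ∈ ((QuotientGroup.mk' N).comp Monoid.Coprod.inl).ker := by
    intro g hg
    rw [hG'] at hg
    simpa only [MonoidHom.mem_ker, MonoidHom.comp_apply, QuotientGroup.mk'_apply,
      QuotientGroup.eq_one_iff, Subgroup.mem_comap] using hg
  set gmap : (G ⧸ G') →* (Monoid.Coprod G H ⧸ N) :=
    QuotientGroup.lift G' ((QuotientGroup.mk' N).comp Monoid.Coprod.inl) hG'ker with hgmap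
  set ψ₀ : Monoid.Coprod (G ⧸ G') H →* (Monoid.Coprod G H ⧸ N) :=
    Monoid.Coprod.lift gmap ((QuotientGroup.mk' N).comp Monoid.Coprod.inr) with hψ₀
  have key : ψ₀.comp π = QuotientGroup.mk' N := by
    apply Monoid.Coprod.hom_ext <;> ext x <;>
      simp [hπ, hψ₀, hgmap, Monoid.Coprod.map_apply_inl, Monoid.Coprod.map_apply_inr]
  have hKker : K ≤ ψ₀.ker := by
    rw [hK]
    apply Subgroup.normalClosure_le_normal
    rintro _ ⟨n, hn, rfl⟩
    have : ψ₀ (π n) = QuotientGroup.mk' N n := by rw [← key]; rfl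
    simp only [SetLike.mem_coe, MonoidHom.mem_ker, this, QuotientGroup.mk'_apply,
      QuotientGroup.eq_one_iff]
    exact hn
  set ψ : ((Monoid.Coprod (G ⧸ G') H) ⧸ K) →* (Monoid.Coprod G H ⧸ N) :=
    QuotientGroup.lift K ψ₀ hKker with hψ
  have h₁ : ψ.comp φ = MonoidHom.id _ := by
    apply QuotientGroup.monoidHom_ext
    refine MonoidHom.ext fun x => ?_
    have : ψ₀ (π x) = QuotientGroup.mk' N x := by rw [← key]; rfl
    simpa [hφ, hψ] using this
  have h₂ : φ.comp ψ = MonoidHom.id _ := by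
    apply QuotientGroup.monoidHom_ext
    apply Monoid.Coprod.hom_ext
    · apply QuotientGroup.monoidHom_ext
      ext g
      simp [hφ, hψ, hψ₀, hgmap, hπ]
    · ext h
      simp [hφ, hψ, hψ₀, hπ]
  exact ⟨MonoidHom.toMulEquiv φ ψ h₁ h₂⟩
end

section
/- Every surjective group homomorphism from ℤ_m * ℤ^{*k} onto Γ × ℤ, where Γ is finite cyclic and m ≥ 1, whose kernel is the normal closure of k−1 elements, yields for every n ≥ 1 a presentation of Γ × ℤ_n with k+1 generators and k+1 relations. -/
/-- Every surjective group homomorphism from `ℤ_m ∗ ℤ^{*k}` onto `Γ × ℤ`,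
where `Γ` is finite cyclic and `m ≥ 1`, whose kernel is the normal closure of `k - 1` elements,
yields for every `n ≥ 1` a presentation of `Γ × ℤ_n` with `k + 1` generators and
`k + 1` relations. -/
theorem stmt_7 {Γ : Type*} [Group Γ] [Finite Γ] [IsCyclic Γ]
    (m k : ℕ) (hm : 1 ≤ m)
    (φ : Monoid.Coprod (Multiplicative (ZMod m)) (FreeGroup (Fin k)) →* Γ × Multiplicative ℤ)
    (hφ : Function.Surjective φ)
    (r : Fin (k - 1) → Monoid.Coprod (Multiplicative (ZMod m)) (FreeGroup (Fin k)))
    (hker : φ.ker = Subgroup.normalClosure (Set.range r)) :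
    ∀ n : ℕ, 1 ≤ n →
      ∃ s : Fin (k + 1) → FreeGroup (Fin (k + 1)),
        Nonempty ((Γ × Multiplicative (ZMod n)) ≃*
          FreeGroup (Fin (k + 1)) ⧸ Subgroup.normalClosure (Set.range s)) := by
  intro n hn
  haveI : NeZero m := ⟨by omega⟩
  rcases Nat.eq_zero_or_pos k with hk0 | hk
  · -- k = 0 : contradiction, the domain is finite but the codomain is infinite
    exfalso
    subst hk0
    have hsurj : Function.Surjective
        (Monoid.Coprod.inl : Multiplicative (ZMod m) →* Monoid.Coprod (Multiplicative (ZMod m)) (FreeGroup (Fin 0))) := by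
      have hmem : ∀ x : Monoid.Coprod (Multiplicative (ZMod m)) (FreeGroup (Fin 0)),
          x ∈ (Monoid.Coprod.inl : Multiplicative (ZMod m) →* Monoid.Coprod (Multiplicative (ZMod m)) (FreeGroup (Fin 0))).range := by
        intro x
        induction x using Monoid.Coprod.induction_on with
        | inl a => exact ⟨a, rfl⟩
        | inr b => exact ⟨1, by rw [Subsingleton.elim b 1]; simp⟩
        | mul x y hx hy => exact mul_mem hx hy
      intro x; exact hmem x
    haveI := Finite.of_surjective _ hsurj
    haveI := Finite.of_surjective _ hφ
    exact (inferInstance : Infinite (Γ × Multiplicative ℤ)).not_finite inferInstance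
  -- main case : k ≥ 1
  -- the canonical surjection ρ : F_{k+1} → ZMod m ∗ F_k
  let gen : Fin (k + 1) → Monoid.Coprod (Multiplicative (ZMod m)) (FreeGroup (Fin k)) := fun i =>
    Fin.cases (Monoid.Coprod.inl (Multiplicative.ofAdd (1 : ZMod m)))
      (fun j => Monoid.Coprod.inr (FreeGroup.of j)) i
  let ρ : FreeGroup (Fin (k + 1)) →* Monoid.Coprod (Multiplicative (ZMod m)) (FreeGroup (Fin k)) := FreeGroup.lift gen
  have hρ0 : ρ (FreeGroup.of 0) = Monoid.Coprod.inl (Multiplicative.ofAdd (1 : ZMod m)) := by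
    rw [show ρ (FreeGroup.of 0) = gen 0 from FreeGroup.lift_apply_of]
    simp [gen]
  have hρs : ∀ j : Fin k, ρ (FreeGroup.of j.succ) = Monoid.Coprod.inr (FreeGroup.of j) := by
    intro j
    rw [show ρ (FreeGroup.of j.succ) = gen j.succ from FreeGroup.lift_apply_of]
    simp [gen]
  have hρ : Function.Surjective ρ := by
    have hmem : ∀ x : Monoid.Coprod (Multiplicative (ZMod m)) (FreeGroup (Fin k)), x ∈ ρ.range := by
      intro x
      induction x using Monoid.Coprod.induction_on with
      | inl a =>
        obtain ⟨z, hz⟩ := ZMod.intCast_surjective (Multiplicative.toAdd a)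
        refine ⟨(FreeGroup.of 0) ^ z, ?_⟩
        rw [map_zpow, hρ0, ← map_zpow]
        congr 1
        rw [← ofAdd_zsmul, zsmul_one, hz, ofAdd_toAdd]
      | inr b =>
        induction b using FreeGroup.induction_on with
        | C1 => exact ⟨1, by simp⟩
        | of j => exact ⟨FreeGroup.of j.succ, hρs j⟩
        | inv_of j h => simpa using inv_mem h
        | mul x y hx hy => simpa using mul_mem hx hy
      | mul x y hx hy => exact mul_mem hx hy
    intro x; exact hmem x
  -- kernel of ρ
  set K : Subgroup (FreeGroup (Fin (k + 1))) := Subgroup.normalClosure {(FreeGroup.of (0 : Fin (k + 1))) ^ m} with hK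
  have hρ0m : ρ ((FreeGroup.of (0 : Fin (k + 1))) ^ m) = 1 := by
    rw [map_pow, hρ0, ← map_pow]
    rw [← ofAdd_nsmul, nsmul_eq_mul, mul_one, ZMod.natCast_self]
    simp
  have hkerρ : ρ.ker = K := by
    apply le_antisymm
    · -- the section σ
      let x0 : FreeGroup (Fin (k + 1)) ⧸ K := QuotientGroup.mk (FreeGroup.of 0)
      have hx0 : x0 ^ m = 1 := by
        rw [← QuotientGroup.mk_pow]
        exact (QuotientGroup.eq_one_iff _).2
          (Subgroup.subset_normalClosure (Set.mem_singleton _))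
      let f1a : ZMod m →+ Additive (FreeGroup (Fin (k + 1)) ⧸ K) :=
        ZMod.lift m ⟨zmultiplesHom (Additive (FreeGroup (Fin (k + 1)) ⧸ K)) (Additive.ofMul x0), by
          simpa [zmultiplesHom] using congrArg Additive.ofMul hx0⟩
      let f1 : Multiplicative (ZMod m) →* FreeGroup (Fin (k + 1)) ⧸ K := AddMonoidHom.toMultiplicativeLeft f1a
      let f2 : FreeGroup (Fin k) →* FreeGroup (Fin (k + 1)) ⧸ K :=
        FreeGroup.lift (fun j => QuotientGroup.mk (FreeGroup.of j.succ))
      let σ : Monoid.Coprod (Multiplicative (ZMod m)) (FreeGroup (Fin k)) →* FreeGroup (Fin (k + 1)) ⧸ K := Monoid.Coprod.lift f1 f2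
      have key : σ.comp ρ = QuotientGroup.mk' K := by
        apply FreeGroup.ext_hom
        intro i
        refine Fin.cases ?_ ?_ i
        · show σ (ρ (FreeGroup.of 0)) = _
          rw [hρ0]
          show Monoid.Coprod.lift f1 f2 _ = _
          rw [Monoid.Coprod.lift_apply_inl]
          have h1 : (1 : ZMod m) = ((1 : ℤ) : ZMod m) := by push_cast; ring
          show (AddMonoidHom.toMultiplicativeLeft f1a) (Multiplicative.ofAdd (1 : ZMod m)) = _
          rw [AddMonoidHom.coe_toMultiplicativeLeft]
          simp only [Function.comp_apply, toAdd_ofAdd]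
          rw [h1]
          simp only [f1a, ZMod.lift_coe]
          simp [zmultiplesHom, x0]
        · intro j
          show σ (ρ (FreeGroup.of j.succ)) = _
          rw [hρs]
          show Monoid.Coprod.lift f1 f2 _ = _
          rw [Monoid.Coprod.lift_apply_inr]
          simp [f2]
      intro g hg
      have : σ (ρ g) = QuotientGroup.mk' K g := by rw [← key]; rfl
      rw [MonoidHom.mem_ker.1 hg, map_one] at this
      exact (QuotientGroup.eq_one_iff g).1 this.symm
    · refine Subgroup.normalClosure_le_normal ?_
      intro x hx
      rw [Set.mem_singleton_iff] at hx
      subst hx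
      exact MonoidHom.mem_ker.2 hρ0m
  -- the composite map ψ : F_{k+1} → Γ × ZMod n
  let π : Multiplicative ℤ →* Multiplicative (ZMod n) :=
    AddMonoidHom.toMultiplicative (Int.castAddHom (ZMod n))
  have hπ : Function.Surjective π := by
    intro x
    obtain ⟨z, hz⟩ := ZMod.intCast_surjective (Multiplicative.toAdd x)
    refine ⟨Multiplicative.ofAdd z, ?_⟩
    show Multiplicative.ofAdd ((z : ℤ) : ZMod n) = x
    rw [hz, ofAdd_toAdd]
  let φ' : Γ × Multiplicative ℤ →* Γ × Multiplicative (ZMod n) := (MonoidHom.id Γ).prodMap π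
  have hφ' : Function.Surjective φ' := Function.Surjective.prodMap Function.surjective_id hπ
  let ψ : FreeGroup (Fin (k + 1)) →* Γ × Multiplicative (ZMod n) := (φ'.comp φ).comp ρ
  have hψ : Function.Surjective ψ := (hφ'.comp hφ).comp hρ
  have hψ_apply : ∀ g : FreeGroup (Fin (k + 1)), ψ g = ((φ (ρ g)).1, Multiplicative.ofAdd
      ((Multiplicative.toAdd (φ (ρ g)).2 : ℤ) : ZMod n)) := by
    intro g
    show φ' (φ (ρ g)) = _
    rfl
  obtain ⟨t, ht⟩ := hφ (1, Multiplicative.ofAdd (1 : ℤ))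
  obtain ⟨τ, hτ⟩ := hρ t
  have hr'ex : ∀ j : Fin (k - 1), ∃ w : FreeGroup (Fin (k + 1)), ρ w = r j := fun j => hρ (r j)
  choose r' hr' using hr'ex
  -- the relators
  let s : Fin (k + 1) → FreeGroup (Fin (k + 1)) := fun i =>
    if h0 : (i : ℕ) = 0 then (FreeGroup.of 0) ^ m
    else if hkk : (i : ℕ) = k then τ ^ n
    else r' ⟨(i : ℕ) - 1, by have := i.isLt; omega⟩
  have hs0 : s 0 = (FreeGroup.of 0) ^ m := by simp [s]
  have hsk : s ⟨k, by omega⟩ = τ ^ n := by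
    show (if h0 : k = 0 then _ else if hkk : k = k then τ ^ n else _) = τ ^ n
    rw [dif_neg (by omega), dif_pos rfl]
  have hsr : ∀ j : Fin (k - 1), s ⟨(j : ℕ) + 1, by have := j.isLt; omega⟩ = r' j := by
    intro j
    have hj := j.isLt
    show (if h0 : (j : ℕ) + 1 = 0 then _ else if hkk : (j : ℕ) + 1 = k then _
      else r' ⟨(j : ℕ) + 1 - 1, _⟩) = r' j
    rw [dif_neg (by omega), dif_neg (by omega)]
    congr 1
  set N := Subgroup.normalClosure (Set.range s) with hN
  haveI : N.Normal := Subgroup.normalClosure_normal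
  have hKN : K ≤ N := by
    rw [hK]
    apply Subgroup.normalClosure_le_normal
    intro x hx
    rw [Set.mem_singleton_iff] at hx
    subst hx
    exact Subgroup.subset_normalClosure ⟨0, hs0⟩
  have hτN : τ ^ n ∈ N := Subgroup.subset_normalClosure ⟨_, hsk⟩
  have hrN : ∀ j, r' j ∈ N := fun j => Subgroup.subset_normalClosure ⟨_, hsr j⟩
  have hkerψ : ψ.ker = N := by
    apply le_antisymm
    · intro g hg
      rw [MonoidHom.mem_ker, hψ_apply] at hg
      have h1 : (φ (ρ g)).1 = 1 := congrArg Prod.fst hg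
      have h2 : ((Multiplicative.toAdd (φ (ρ g)).2 : ℤ) : ZMod n) = 0 := by
        have := congrArg (fun x : Γ × Multiplicative (ZMod n) => Multiplicative.toAdd x.2) hg
        simpa using this
      obtain ⟨j, hj⟩ := (ZMod.intCast_zmod_eq_zero_iff_dvd _ n).1 h2
      have hφρg : φ (ρ g) = (1, Multiplicative.ofAdd ((n : ℤ) * j)) := by
        refine Prod.ext h1 ?_
        rw [← ofAdd_toAdd (φ (ρ g)).2, hj]
      have hpow : φ (ρ ((τ ^ n) ^ j)) = (1, Multiplicative.ofAdd ((n : ℤ) * j)) := by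
        rw [map_zpow, map_pow, hτ, map_zpow, map_pow, ht]
        refine Prod.ext (by simp) ?_
        show Multiplicative.ofAdd ((j : ℤ) • ((n : ℕ) • (1 : ℤ))) = _
        congr 1
        simp [mul_comm]
      have hmemker : g * ((τ ^ n) ^ j)⁻¹ ∈ φ.ker.comap ρ := by
        simp only [Subgroup.mem_comap, MonoidHom.mem_ker, map_mul, map_inv, hφρg, hpow]
        group
      rw [hker] at hmemker
      have hsub : Subgroup.normalClosure (Set.range r) ≤ Subgroup.map ρ N := by
        rw [hN, Subgroup.map_normalClosure _ _ hρ]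
        apply Subgroup.normalClosure_mono
        rintro _ ⟨j', rfl⟩
        exact ⟨r' j', ⟨_, hsr j'⟩, hr' j'⟩
      obtain ⟨h', hh'N, hh'⟩ := hsub hmemker
      have hker2 : (g * ((τ ^ n) ^ j)⁻¹) * h'⁻¹ ∈ ρ.ker := by
        rw [MonoidHom.mem_ker, map_mul, map_inv, hh']
        group
      rw [hkerρ] at hker2
      have hgN : g * ((τ ^ n) ^ j)⁻¹ ∈ N := by
        have : g * ((τ ^ n) ^ j)⁻¹ = ((g * ((τ ^ n) ^ j)⁻¹) * h'⁻¹) * h' := by group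
        rw [this]
        exact mul_mem (hKN hker2) hh'N
      have : g = (g * ((τ ^ n) ^ j)⁻¹) * (τ ^ n) ^ j := by group
      rw [this]
      exact mul_mem hgN (zpow_mem hτN j)
    · apply Subgroup.normalClosure_le_normal
      rintro _ ⟨i, rfl⟩
      rw [SetLike.mem_coe, MonoidHom.mem_ker]
      by_cases h0 : (i : ℕ) = 0
      · have : i = 0 := Fin.ext h0
        subst this
        rw [hs0]
        show (φ'.comp φ) (ρ ((FreeGroup.of 0) ^ m)) = 1
        rw [hρ0m, map_one]
      · by_cases hkk : (i : ℕ) = k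
        · rw [show i = ⟨k, by omega⟩ from Fin.ext hkk, hsk, hψ_apply]
          rw [map_pow, hτ, map_pow, ht]
          refine Prod.ext (by simp) ?_
          show Multiplicative.ofAdd ((Multiplicative.toAdd
            (((1 : Γ), Multiplicative.ofAdd (1 : ℤ)) ^ n).2 : ℤ) : ZMod n) = 1
          have : (((1 : Γ), Multiplicative.ofAdd (1 : ℤ)) ^ n).2
              = Multiplicative.ofAdd ((n : ℕ) • (1 : ℤ)) := by
            rw [Prod.pow_snd, ← ofAdd_nsmul]
          rw [this]
          simp
        · have hi : i = ⟨((i : ℕ) - 1 : ℕ) + 1, by have := i.isLt; omega⟩ := Fin.ext (by simp only [Fin.val_mk]; omega)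
          have hival : (i : ℕ) - 1 < k - 1 := by have := i.isLt; omega
          have : s i = r' ⟨(i : ℕ) - 1, hival⟩ := by
            conv_lhs => rw [hi]
            exact hsr ⟨(i : ℕ) - 1, hival⟩
          rw [this]
          show (φ'.comp φ) (ρ (r' _)) = 1
          rw [hr', MonoidHom.comp_apply]
          have : φ (r ⟨(i : ℕ) - 1, hival⟩) = 1 := by
            rw [← MonoidHom.mem_ker, hker]
            exact Subgroup.subset_normalClosure (Set.mem_range_self _)
          rw [this, map_one]
  refine ⟨s, ⟨?_⟩⟩
  exact (QuotientGroup.quotientKerEquivOfSurjective ψ hψ).symm.trans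
    (QuotientGroup.quotientMulEquivOfEq hkerψ)
end
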